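/- Let ℓ ≥ 1, let γ > 0, let θ be a Borel probability measure on the unit sphere S^{ℓ−1} ⊆ ℝ^ℓ, and let μ = γ·(λ ⊗ θ) where λ is Lebesgue measure on ℝ. Then for all 0 < a < b, μ(Ĝ_1(a,b)) = γ·∫_{S^{ℓ−1}} max( b·(u_1 − S(u)) − a·(u_1 + S(u)), 0 ) θ(du), where S(u) = ∑_{i=2}^ℓ |u_i|. -/

import Mathlib

open MeasureTheory

noncomputable section

/-- The hyperplane `H(α,u) = {x : ⟨x,u⟩ = α}` in `ℝ^ℓ`. -/
def Hplane (ℓ : ℕ) (α : ℝ) (u : EuclideanSpace ℝ (Fin ℓ)) : Set (EuclideanSpace ℝ (Fin ℓ)) :=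
  {x | (inner ℝ x u : ℝ) = α}

/-- The closed half-space `H⁻(α,u) = {x : ⟨x,u⟩ ≤ α}`. -/
def Hminus (ℓ : ℕ) (α : ℝ) (u : EuclideanSpace ℝ (Fin ℓ)) : Set (EuclideanSpace ℝ (Fin ℓ)) :=
  {x | (inner ℝ x u : ℝ) ≤ α}

/-- The closed half-space `H⁺(α,u) = {x : ⟨x,u⟩ ≥ α}`. -/
def Hplus (ℓ : ℕ) (α : ℝ) (u : EuclideanSpace ℝ (Fin ℓ)) : Set (EuclideanSpace ℝ (Fin ℓ)) :=
  {x | α ≤ (inner ℝ x u : ℝ)}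

/-- The hyperplane `H(α,u)` separates the sets `A` and `B`. -/
def Separates {ℓ : ℕ} (A B : Set (EuclideanSpace ℝ (Fin ℓ))) (α : ℝ)
    (u : EuclideanSpace ℝ (Fin ℓ)) : Prop :=
  (A ⊆ Hplus ℓ α u ∧ B ⊆ Hminus ℓ α u) ∨ (A ⊆ Hminus ℓ α u ∧ B ⊆ Hplus ℓ α u)

/-- The facet `f_i(c) = {x : x_i = c, |x_j| ≤ c for j ≠ i}` of the cube `[−c,c]^ℓ`. -/
def facetBase (ℓ : ℕ) (i : Fin ℓ) (c : ℝ) : Set (EuclideanSpace ℝ (Fin ℓ)) :=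
  {x | x i = c ∧ ∀ j, j ≠ i → |x j| ≤ c}

/-- The `2ℓ` facets of the cube `[−c,c]^ℓ`, indexed by `Fin ℓ ⊕ Fin ℓ`:
`Sum.inl i` is `f_i(c)` and `Sum.inr i` is `f_{i+ℓ}(c) = −f_i(c)`. -/
def facet (ℓ : ℕ) (i : Fin ℓ ⊕ Fin ℓ) (c : ℝ) : Set (EuclideanSpace ℝ (Fin ℓ)) :=
  match i with
  | Sum.inl i => facetBase ℓ i c
  | Sum.inr i => (fun x => -x) '' facetBase ℓ i c

/-- The unit sphere `S^{ℓ−1}` in `ℝ^ℓ`. -/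
abbrev unitSphere (ℓ : ℕ) : Set (EuclideanSpace ℝ (Fin ℓ)) :=
  Metric.sphere (0 : EuclideanSpace ℝ (Fin ℓ)) 1

/-- `Ĝ_i(a,b)`: the set of parameters `(α,u) ∈ [0,∞) × S^{ℓ−1}` such that `H(α,u)`
separates `f_i(a)` and `f_i(b)`. -/
def Ghat (ℓ : ℕ) (i : Fin ℓ ⊕ Fin ℓ) (a b : ℝ) : Set (ℝ × unitSphere ℓ) :=
  {p | 0 ≤ p.1 ∧ Separates (facet ℓ i a) (facet ℓ i b) p.1 (p.2 : EuclideanSpace ℝ (Fin ℓ))}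

/-- The hyperplane measure `μ = γ·(λ ⊗ θ)` on `ℝ × S^{ℓ−1}`. -/
def hypMeasure (ℓ : ℕ) (γ : ℝ) (θ : Measure (unitSphere ℓ)) : Measure (ℝ × unitSphere ℓ) :=
  ENNReal.ofReal γ • ((volume : Measure ℝ).prod θ)


section auxlemmas

variable {ℓ : ℕ}

lemma aux_sign_mul (t : ℝ) : Real.sign t * t = |t| := by
  rcases lt_trichotomy t 0 with h | h | h
  · rw [Real.sign_of_neg h, abs_of_neg h]; ring
  · simp [h]
  · rw [Real.sign_of_pos h, abs_of_pos h]; ring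

lemma aux_abs_sign_le_one (t : ℝ) : |Real.sign t| ≤ 1 := by
  rcases lt_trichotomy t 0 with h | h | h
  · simp [Real.sign_of_neg h]
  · simp [h]
  · simp [Real.sign_of_pos h]

lemma aux_inner_eval (x u : EuclideanSpace ℝ (Fin ℓ)) :
    (inner ℝ x u : ℝ) = ∑ i, x i * u i := by
  simp [PiLp.inner_apply, RCLike.inner_apply, conj_trivial, mul_comm]

lemma facet_subset_hminus (i0 : Fin ℓ) (c α : ℝ) (hc : 0 < c)
    (u : EuclideanSpace ℝ (Fin ℓ)) :
    facetBase ℓ i0 c ⊆ Hminus ℓ α u ↔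
      c * u i0 + c * ∑ j ∈ Finset.univ.erase i0, |u j| ≤ α := by
  constructor
  · intro h
    set x : EuclideanSpace ℝ (Fin ℓ) :=
      WithLp.toLp 2 (fun j => if j = i0 then c else c * Real.sign (u j)) with hx
    have hxmem : x ∈ facetBase ℓ i0 c := by
      refine ⟨by simp [hx], fun j hj => ?_⟩
      simp only [hx, PiLp.toLp_apply, if_neg hj]
      rw [abs_mul, abs_of_pos hc]
      calc c * |Real.sign (u j)| ≤ c * 1 := by
            exact mul_le_mul_of_nonneg_left (aux_abs_sign_le_one _) hc.le
        _ = c := mul_one c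
    have hmem := h hxmem
    have hinner : (inner ℝ x u : ℝ) =
        c * u i0 + c * ∑ j ∈ Finset.univ.erase i0, |u j| := by
      rw [aux_inner_eval]
      rw [← Finset.sum_erase_add _ _ (Finset.mem_univ i0)]
      have h1 : x i0 * u i0 = c * u i0 := by simp [hx]
      have h2 : ∑ j ∈ Finset.univ.erase i0, x j * u j =
          ∑ j ∈ Finset.univ.erase i0, c * |u j| := by
        refine Finset.sum_congr rfl fun j hj => ?_
        have hj' : j ≠ i0 := Finset.ne_of_mem_erase hj
        rw [hx]
        simp only [PiLp.toLp_apply, if_neg hj']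
        rw [mul_assoc, aux_sign_mul]
      rw [h1, h2, ← Finset.mul_sum]
      ring
    have := hmem
    simp only [Hminus, Set.mem_setOf_eq] at this
    linarith [this, hinner.symm.le, hinner.le]
  · intro hle x hxmem
    obtain ⟨hx0, hxj⟩ := hxmem
    simp only [Hminus, Set.mem_setOf_eq]
    rw [aux_inner_eval]
    rw [← Finset.sum_erase_add _ _ (Finset.mem_univ i0)]
    have hbound : ∑ j ∈ Finset.univ.erase i0, x j * u j ≤
        ∑ j ∈ Finset.univ.erase i0, c * |u j| := by
      refine Finset.sum_le_sum fun j hj => ?_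
      have hj' : j ≠ i0 := Finset.ne_of_mem_erase hj
      calc x j * u j ≤ |x j * u j| := le_abs_self _
        _ = |x j| * |u j| := abs_mul _ _
        _ ≤ c * |u j| := mul_le_mul_of_nonneg_right (hxj j hj') (abs_nonneg _)
    have : ∑ j ∈ Finset.univ.erase i0, c * |u j| =
        c * ∑ j ∈ Finset.univ.erase i0, |u j| := (Finset.mul_sum _ _ _).symm
    rw [hx0]
    linarith [hbound, this.le, this.symm.le]

lemma facet_subset_hplus (i0 : Fin ℓ) (c α : ℝ) (hc : 0 < c)
    (u : EuclideanSpace ℝ (Fin ℓ)) :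
    facetBase ℓ i0 c ⊆ Hplus ℓ α u ↔
      α ≤ c * u i0 - c * ∑ j ∈ Finset.univ.erase i0, |u j| := by
  have key := facet_subset_hminus i0 c (-α) hc (-u)
  have hset : Hminus ℓ (-α) (-u) = Hplus ℓ α u := by
    ext x
    simp only [Hminus, Hplus, Set.mem_setOf_eq, inner_neg_right]
    constructor <;> intro h <;> linarith
  rw [hset] at key
  have hcoord : ∀ j, (-u : EuclideanSpace ℝ (Fin ℓ)) j = -(u j) := fun j => rfl
  rw [key]
  have habs : ∑ j ∈ Finset.univ.erase i0, |(-u : EuclideanSpace ℝ (Fin ℓ)) j| =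
      ∑ j ∈ Finset.univ.erase i0, |u j| := by
    refine Finset.sum_congr rfl fun j _ => ?_
    rw [hcoord, abs_neg]
  rw [hcoord, habs]
  constructor <;> intro h <;> linarith

lemma aux_ofReal_max_zero (x : ℝ) : ENNReal.ofReal (max x 0) = ENNReal.ofReal x := by
  rcases le_total x 0 with h | h
  · rw [max_eq_right h, ENNReal.ofReal_of_nonpos h]; simp
  · rw [max_eq_left h]

end auxlemmas

/-- Explicit formula: for `0 < a < b`,
`μ(Ĝ_1(a,b)) = γ·∫ max(b·(u_1 − S(u)) − a·(u_1 + S(u)), 0) θ(du)`,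
where `S(u) = ∑_{i=2}^ℓ |u_i|`. -/
theorem stmt16 (ℓ : ℕ) (hℓ : 0 < ℓ) (γ : ℝ) (hγ : 0 < γ)
    (θ : Measure (unitSphere ℓ)) [IsProbabilityMeasure θ]
    (a b : ℝ) (ha : 0 < a) (hab : a < b) :
    hypMeasure ℓ γ θ (Ghat ℓ (Sum.inl ⟨0, hℓ⟩) a b) =
      ENNReal.ofReal γ *
        ∫⁻ u : unitSphere ℓ, ENNReal.ofReal
          (max (b * ((u : EuclideanSpace ℝ (Fin ℓ)) ⟨0, hℓ⟩ -
                  ∑ i ∈ Finset.univ.erase ⟨0, hℓ⟩, |(u : EuclideanSpace ℝ (Fin ℓ)) i|) -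
                a * ((u : EuclideanSpace ℝ (Fin ℓ)) ⟨0, hℓ⟩ +
                  ∑ i ∈ Finset.univ.erase ⟨0, hℓ⟩, |(u : EuclideanSpace ℝ (Fin ℓ)) i|))
            0) ∂θ := by
  classical
  have hb : 0 < b := ha.trans hab
  set i0 : Fin ℓ := ⟨0, hℓ⟩ with hi0
  set S : unitSphere ℓ → ℝ :=
    fun u => ∑ i ∈ Finset.univ.erase i0, |(u : EuclideanSpace ℝ (Fin ℓ)) i| with hSdef
  set L : unitSphere ℓ → ℝ :=
    fun u => a * ((u : EuclideanSpace ℝ (Fin ℓ)) i0 + S u) with hLdef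
  set R : unitSphere ℓ → ℝ :=
    fun u => b * ((u : EuclideanSpace ℝ (Fin ℓ)) i0 - S u) with hRdef
  have hSnn : ∀ u, 0 ≤ S u := fun u => Finset.sum_nonneg fun i _ => abs_nonneg _
  -- Key set equality
  have key : Ghat ℓ (Sum.inl i0) a b =
      {p : ℝ × unitSphere ℓ | L p.2 ≤ p.1 ∧ p.1 ≤ R p.2 ∧ 0 ≤ p.1} := by
    ext ⟨α, u⟩
    simp only [Ghat, Separates, Set.mem_setOf_eq]
    have hfa : facet ℓ (Sum.inl i0) a = facetBase ℓ i0 a := rfl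
    have hfb : facet ℓ (Sum.inl i0) b = facetBase ℓ i0 b := rfl
    rw [hfa, hfb, facet_subset_hminus i0 a α ha (u : EuclideanSpace ℝ (Fin ℓ)),
        facet_subset_hplus i0 a α ha (u : EuclideanSpace ℝ (Fin ℓ)),
        facet_subset_hminus i0 b α hb (u : EuclideanSpace ℝ (Fin ℓ)),
        facet_subset_hplus i0 b α hb (u : EuclideanSpace ℝ (Fin ℓ))]
    have hSu : 0 ≤ S u := hSnn u
    simp only [hLdef, hRdef, hSdef]
    set u0 : ℝ := (u : EuclideanSpace ℝ (Fin ℓ)) i0 with hu0def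
    set Ssum : ℝ := ∑ i ∈ Finset.univ.erase i0, |(u : EuclideanSpace ℝ (Fin ℓ)) i| with hSsumdef
    constructor
    · rintro ⟨h0, (⟨h1, h2⟩ | ⟨h1, h2⟩)⟩
      · exfalso
        have hi : a * Ssum ≤ a * u0 := by linarith
        have hSule : Ssum ≤ u0 := le_of_mul_le_mul_left hi ha
        have hu0nn : 0 ≤ u0 := le_trans hSu hSule
        have h3 : 0 ≤ (b - a) * u0 := mul_nonneg (by linarith) hu0nn
        have h4 : 0 ≤ (a + b) * Ssum := mul_nonneg (by linarith) hSu
        have h5 : (b - a) * u0 + (a + b) * Ssum ≤ 0 := by nlinarith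
        have h6 : (b - a) * u0 = 0 := le_antisymm (by linarith) h3
        have hu0z : u0 = 0 := by
          rcases mul_eq_zero.mp h6 with h | h
          · exfalso; linarith
          · exact h
        have h7 : (a + b) * Ssum = 0 := le_antisymm (by linarith) h4
        have hSsum0 : Ssum = 0 := by
          rcases mul_eq_zero.mp h7 with h | h
          · exfalso; linarith
          · exact h
        have hall := (Finset.sum_eq_zero_iff_of_nonneg
          (fun j _ => abs_nonneg ((u : EuclideanSpace ℝ (Fin ℓ)) j))).mp hSsum0
        have hz : (u : EuclideanSpace ℝ (Fin ℓ)) = 0 := by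
          ext j
          show (u : EuclideanSpace ℝ (Fin ℓ)) j = 0
          by_cases hj : j = i0
          · rw [hj]; exact hu0z
          · exact abs_eq_zero.mp
              (hall j (Finset.mem_erase.mpr ⟨hj, Finset.mem_univ j⟩))
        have hn : ‖(u : EuclideanSpace ℝ (Fin ℓ))‖ = 1 :=
          mem_sphere_zero_iff_norm.mp u.2
        rw [hz] at hn
        simp at hn
      · exact ⟨by linarith, by linarith, h0⟩
    · rintro ⟨h1, h2, h0⟩
      exact ⟨h0, Or.inr ⟨by linarith, by linarith⟩⟩
  -- Measurability
  have hScont : Continuous S := by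
    apply continuous_finset_sum
    intro i _
    exact continuous_abs.comp ((PiLp.continuous_apply 2 _ i).comp continuous_subtype_val)
  have hcoord : Continuous fun u : unitSphere ℓ => (u : EuclideanSpace ℝ (Fin ℓ)) i0 :=
    (PiLp.continuous_apply 2 _ i0).comp continuous_subtype_val
  have hLcont : Continuous L := continuous_const.mul (hcoord.add hScont)
  have hRcont : Continuous R := continuous_const.mul (hcoord.sub hScont)
  have hmeas : MeasurableSet
      {p : ℝ × unitSphere ℓ | L p.2 ≤ p.1 ∧ p.1 ≤ R p.2 ∧ 0 ≤ p.1} := by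
    refine MeasurableSet.inter ?_ (MeasurableSet.inter ?_ ?_)
    · exact measurableSet_le ((hLcont.measurable).comp measurable_snd) measurable_fst
    · exact measurableSet_le measurable_fst ((hRcont.measurable).comp measurable_snd)
    · exact measurableSet_le measurable_const measurable_fst
  rw [key]
  show (ENNReal.ofReal γ • ((volume : Measure ℝ).prod θ)) _ = _
  rw [Measure.smul_apply, smul_eq_mul, Measure.prod_apply_symm hmeas]
  congr 1
  refine lintegral_congr fun u => ?_
  have hsec : (fun α => (α, u)) ⁻¹'
      {p : ℝ × unitSphere ℓ | L p.2 ≤ p.1 ∧ p.1 ≤ R p.2 ∧ 0 ≤ p.1} =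
      Set.Icc (max (L u) 0) (R u) := by
    ext α
    simp only [Set.mem_preimage, Set.mem_setOf_eq, Set.mem_Icc, max_le_iff]
    tauto
  rw [hsec, Real.volume_Icc]
  show ENNReal.ofReal (R u - max (L u) 0) = ENNReal.ofReal (max (R u - L u) 0)
  rw [aux_ofReal_max_zero]
  rcases le_or_gt 0 (L u) with h | h
  · rw [max_eq_left h]
  · have hSu : 0 ≤ S u := hSnn u
    have hu0 : (u : EuclideanSpace ℝ (Fin ℓ)) i0 + S u < 0 := by
      by_contra hcon
      push_neg at hcon
      have : 0 ≤ L u := mul_nonneg ha.le hcon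
      linarith
    have hu0' : (u : EuclideanSpace ℝ (Fin ℓ)) i0 < 0 := by linarith
    have hRneg : R u ≤ 0 := by
      rw [hRdef]
      have : (u : EuclideanSpace ℝ (Fin ℓ)) i0 - S u ≤ 0 := by linarith
      exact mul_nonpos_of_nonneg_of_nonpos hb.le this
    have hRL : R u - L u ≤ 0 := by
      have t1 : (b - a) * ((u : EuclideanSpace ℝ (Fin ℓ)) i0) ≤ 0 :=
        mul_nonpos_of_nonneg_of_nonpos (by linarith) hu0'.le
      have t2 : 0 ≤ (a + b) * S u := mul_nonneg (by linarith) hSu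
      show b * ((u : EuclideanSpace ℝ (Fin ℓ)) i0 - S u) -
          a * ((u : EuclideanSpace ℝ (Fin ℓ)) i0 + S u) ≤ 0
      nlinarith [t1, t2]
    rw [max_eq_right h.le, sub_zero, ENNReal.ofReal_of_nonpos hRneg,
        ENNReal.ofReal_of_nonpos hRL]

end
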